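/- Let d≥1, α=(α_1,…,α_d)∈(−1,∞)^d and n∈ℕ. Then the Laguerre polynomial addition formula holds: ∑_{μ∈ℕ^d, μ_1+…+μ_d=n} ∏_{i=1}^d L_{μ_i}^{α_i}(x_i) = L_n^{α_1+…+α_d+d−1}(x_1+…+x_d) for all x=(x_1,…,x_d)∈ℝ^d. Equivalently, with L̃_n^a:=L_n^a/√(L_n^a(0)) and L̃_μ^α(x):=∏_{i=1}^d L̃_{μ_i}^{α_i}(x_i), one has ∑_{|μ|_1=n} L̃_μ^α(0)·L̃_μ^α(x)=L_n^{|α|_1+d−1}(x_1+…+x_d). -/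

import Mathlib

open MeasureTheory Real Set Filter
open scoped ENNReal Topology BigOperators NNReal

noncomputable section

/-- The positive orthant `ℝ_+^d = (0,∞)^d`. -/
def Rplus (d : ℕ) : Set (EuclideanSpace ℝ (Fin d)) := {x | ∀ i, 0 < x i}

/-- The Laguerre polynomial `L_n^a(x) = ∑_{j=0}^n Γ(n+a+1)/(Γ(n-j+1)Γ(j+a+1)) (-x)^j/j!`. -/
def laguerreL (a : ℝ) (n : ℕ) (x : ℝ) : ℝ :=
  ∑ j ∈ Finset.range (n + 1),
    Real.Gamma (n + a + 1) / (Real.Gamma ((n : ℝ) - j + 1) * Real.Gamma (j + a + 1))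
      * (-x) ^ j / (Nat.factorial j)

/-- The one-dimensional Laguerre function
`φ_n^a(x) = (2 n!/Γ(n+a+1))^{1/2} x^{a+1/2} L_n^a(x²) e^{-x²/2}`. -/
def laguerreFun (a : ℝ) (n : ℕ) (x : ℝ) : ℝ :=
  Real.sqrt (2 * Nat.factorial n / Real.Gamma (n + a + 1))
    * x ^ (a + 1/2) * laguerreL a n (x ^ 2) * Real.exp (-x ^ 2 / 2)

/-- The multiple Laguerre function `φ_μ^α(x) = ∏_i φ_{μ_i}^{α_i}(x_i)`. -/
def laguerreFunD {d : ℕ} (α : Fin d → ℝ) (μ : Fin d → ℕ) (x : EuclideanSpace ℝ (Fin d)) : ℝ :=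
  ∏ i, laguerreFun (α i) (μ i) (x i)

/-- The spectral projection `P_n^α f = ∑_{|μ|₁ = n} ⟨f, φ_μ^α⟩ φ_μ^α`. -/
def laguerreProj {d : ℕ} (α : Fin d → ℝ) (n : ℕ) (f : EuclideanSpace ℝ (Fin d) → ℂ)
    (x : EuclideanSpace ℝ (Fin d)) : ℂ :=
  ∑ μ ∈ Finset.Nat.antidiagonalTuple d n,
    (∫ y in Rplus d, f y * (laguerreFunD α μ y : ℂ)) * (laguerreFunD α μ x : ℂ)

/-- The eigenvalue `4n + 2|α|₁ + 2d` of the Hermite–Laguerre operator `𝓛^α`. -/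
def eigenvalue (d : ℕ) (α : Fin d → ℝ) (n : ℕ) : ℝ := 4 * n + 2 * (∑ i, α i) + 2 * d

/-- `t ↦ (t)_+^λ` (vanishing for `t ≤ 0`). -/
def plusPow (lam t : ℝ) : ℝ := if 0 < t then t ^ lam else 0

/-- The Bochner–Riesz mean `S_R^λ(𝓛^α) f = ∑_n (1 - (4n+2|α|₁+2d)/R²)_+^λ P_n^α f`. -/
def bochnerRiesz {d : ℕ} (α : Fin d → ℝ) (lam R : ℝ) (f : EuclideanSpace ℝ (Fin d) → ℂ)
    (x : EuclideanSpace ℝ (Fin d)) : ℂ :=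
  ∑' n : ℕ, (plusPow lam (1 - eigenvalue d α n / R ^ 2) : ℂ) * laguerreProj α n f x

/-- The critical index `λ(p) = max{d(1/2 - 1/p) - 1/2, 0}`. -/
def lamIdx (d : ℕ) (p : ℝ) : ℝ := max (d * (1/2 - 1/p) - 1/2) 0


namespace Statement17Aux

open Finset Polynomial


lemma smeval_desc (k : ℕ) (r : ℝ) :
    (descPochhammer ℤ k).smeval r = (descPochhammer ℝ k).eval r := by
  rw [← Polynomial.aeval_eq_smeval, Polynomial.aeval_def, ← Polynomial.eval_map,
    descPochhammer_map]

lemma desc_neg_eq (C : ℝ) (i : ℕ) :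
    (descPochhammer ℝ i).eval (-C) = (-1 : ℝ) ^ i * (ascPochhammer ℝ i).eval C := by
  have h := ascPochhammer_eval_neg_eq_descPochhammer ℝ (-C) i
  rw [neg_neg] at h
  rw [h, ← mul_assoc, ← pow_add, Even.neg_one_pow ⟨i, by ring⟩, one_mul]

lemma asc_vand (N : ℕ) (A B : ℝ) :
    (ascPochhammer ℝ N).eval (A + B) = ∑ p ∈ Finset.HasAntidiagonal.antidiagonal N,
      (N.choose p.1 : ℝ) * ((ascPochhammer ℝ p.1).eval A * (ascPochhammer ℝ p.2).eval B) := by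
  have h := Ring.descPochhammer_smeval_add (r := (-A : ℝ)) (s := -B) N (Commute.all _ _)
  simp only [smeval_desc] at h
  rw [show (-A) + -B = -(A + B) by ring] at h
  have h1 := ascPochhammer_eval_neg_eq_descPochhammer ℝ (-(A+B)) N
  rw [neg_neg, h, h1, Finset.mul_sum] at *
  refine Finset.sum_congr rfl fun p hp => ?_
  have hp' : p.1 + p.2 = N := Finset.HasAntidiagonal.mem_antidiagonal.mp hp
  rw [desc_neg_eq, desc_neg_eq]
  rw [← hp']
  ring_nf
  rw [show ((-1:ℝ))^(p.1*2) = 1 from Even.neg_one_pow ⟨p.1, by ring⟩,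
    show ((-1:ℝ))^(p.2*2) = 1 from Even.neg_one_pow ⟨p.2, by ring⟩]
  ring

lemma Gamma_asc {A : ℝ} (hA : 0 < A) (r : ℕ) :
    Real.Gamma (A + r) = (ascPochhammer ℝ r).eval A * Real.Gamma A := by
  induction r with
  | zero => simp
  | succ r ih =>
    rw [show A + ((r:ℕ)+1 : ℕ) = (A + r) + 1 by push_cast; ring,
      Real.Gamma_add_one (by positivity), ih, ascPochhammer_succ_eval]
    ring

lemma gamma_vand {A B : ℝ} (hA : 0 < A) (hB : 0 < B) (N : ℕ) :
    ∑ p ∈ Finset.HasAntidiagonal.antidiagonal N,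
        Real.Gamma (A + p.1) * Real.Gamma (B + p.2) / (p.1.factorial * p.2.factorial)
      = Real.Gamma A * Real.Gamma B * Real.Gamma (A + B + N)
          / (N.factorial * Real.Gamma (A + B)) := by
  have hAB : (0:ℝ) < A + B := by linarith
  rw [Gamma_asc hAB N, asc_vand, Finset.sum_mul, Finset.mul_sum, Finset.sum_div]
  refine Finset.sum_congr rfl fun p hp => ?_
  obtain ⟨i, j⟩ := p
  have hij : i + j = N := Finset.HasAntidiagonal.mem_antidiagonal.mp hp
  have hch : ((N.choose i : ℕ) : ℝ) * i.factorial * j.factorial = N.factorial := by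
    exact_mod_cast congrArg (Nat.cast : ℕ → ℝ) (by
      have := Nat.choose_mul_factorial_mul_factorial (n := N) (k := i) (by omega)
      rwa [show N - i = j by omega] at this)
  rw [Gamma_asc hA, Gamma_asc hB]
  have h1 : (i.factorial : ℝ) ≠ 0 := by positivity
  have h2 : (j.factorial : ℝ) ≠ 0 := by positivity
  have h3 : (N.factorial : ℝ) ≠ 0 := by positivity
  have h4 : Real.Gamma (A + B) ≠ 0 := (Real.Gamma_pos_of_pos hAB).ne'
  field_simp
  linear_combination (-((ascPochhammer ℝ i).eval A * (ascPochhammer ℝ j).eval B)) * hch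

noncomputable def lcoef (a : ℝ) (n k : ℕ) : ℝ :=
  Real.Gamma (n + a + 1) / (Real.Gamma ((n : ℝ) - k + 1) * Real.Gamma (k + a + 1))
    / (Nat.factorial k)

lemma laguerreL_eq (a : ℝ) (n : ℕ) (x : ℝ) :
    laguerreL a n x = ∑ k ∈ range (n + 1), lcoef a n k * (-x) ^ k := by
  unfold laguerreL lcoef
  exact Finset.sum_congr rfl fun k _ => by ring

lemma lcoef_eq_zero (a : ℝ) {n k : ℕ} (h : n < k) : lcoef a n k = 0 := by
  unfold lcoef
  have h1 : ((k - n - 1 : ℕ) : ℝ) = (k : ℝ) - n - 1 := by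
    rw [Nat.cast_sub (by omega), Nat.cast_sub (by omega)]; push_cast; ring
  rw [show (n : ℝ) - k + 1 = -((k - n - 1 : ℕ) : ℝ) by rw [h1]; ring]
  rw [Real.Gamma_neg_nat_eq_zero, zero_mul, div_zero, zero_div]

lemma laguerreL_eq' (a : ℝ) {n N : ℕ} (h : n ≤ N) (x : ℝ) :
    laguerreL a n x = ∑ k ∈ range (N + 1), lcoef a n k * (-x) ^ k := by
  rw [laguerreL_eq]
  apply Finset.sum_subset (Finset.range_subset_range.mpr (by omega))
  intro k hk hk'
  simp only [Finset.mem_range] at hk hk'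
  rw [lcoef_eq_zero a (by omega), zero_mul]

lemma key (a b : ℝ) (ha : -1 < a) (hb : -1 < b) (n i j : ℕ) :
    ∑ p ∈ Finset.HasAntidiagonal.antidiagonal n, lcoef a p.1 i * lcoef b p.2 j
      = if i + j ≤ n then (((i+j).choose i : ℕ) : ℝ) * lcoef (a+b+1) n (i+j) else 0 := by
  by_cases h : i + j ≤ n
  · rw [if_pos h]
    set N := n - i - j with hN
    have hi0 : (0:ℝ) ≤ i := Nat.cast_nonneg i
    have hj0 : (0:ℝ) ≤ j := Nat.cast_nonneg j
    have hA : (0:ℝ) < (i:ℝ) + a + 1 := by linarith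
    have hB : (0:ℝ) < (j:ℝ) + b + 1 := by linarith
    have hgv := gamma_vand hA hB N
    rw [Finset.Nat.sum_antidiagonal_eq_sum_range_succ_mk] at hgv
    rw [Finset.Nat.sum_antidiagonal_eq_sum_range_succ_mk]
    have hsub : Finset.Ico i (n - j + 1) ⊆ Finset.range (n+1) := by
      intro k hk; simp only [Finset.mem_Ico, Finset.mem_range] at *; omega
    have hv : ∀ k ∈ range (n+1), k ∉ Finset.Ico i (n-j+1) →
        lcoef a k i * lcoef b (n-k) j = 0 := by
      intro k hk hk'
      simp only [Finset.mem_range] at hk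
      simp only [Finset.mem_Ico, not_and_or, not_le, not_lt] at hk'
      rcases hk' with h' | h'
      · rw [lcoef_eq_zero a h', zero_mul]
      · rw [lcoef_eq_zero b (by omega), mul_zero]
    rw [← Finset.sum_subset hsub hv, Finset.sum_Ico_eq_sum_range,
      show n - j + 1 - i = N + 1 by omega]
    have hfne : ∀ m : ℕ, ((m.factorial : ℕ) : ℝ) ≠ 0 := fun m => by positivity
    have hGA : Real.Gamma ((i:ℝ) + a + 1) ≠ 0 := (Real.Gamma_pos_of_pos hA).ne'
    have hGB : Real.Gamma ((j:ℝ) + b + 1) ≠ 0 := (Real.Gamma_pos_of_pos hB).ne'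
    have hterm : ∀ r ∈ range (N+1), lcoef a (i+r) i * lcoef b (n-(i+r)) j
        = Real.Gamma (((i:ℝ) + a + 1) + r) * Real.Gamma (((j:ℝ) + b + 1) + ((N - r : ℕ) : ℝ))
            / ((r.factorial : ℝ) * (N-r).factorial)
          / (Real.Gamma ((i:ℝ)+a+1) * Real.Gamma ((j:ℝ)+b+1) * i.factorial * j.factorial) := by
      intro r hr
      have hrN : r ≤ N := by simp only [Finset.mem_range] at hr; omega
      have e0 : n - (i + r) = j + (N - r) := by omega
      unfold lcoef
      rw [e0,
        show ((i+r:ℕ):ℝ) + a + 1 = ((i:ℝ) + a + 1) + r by push_cast; ring,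
        show ((i+r:ℕ):ℝ) - i + 1 = (r:ℝ) + 1 by push_cast; ring,
        show ((j+(N-r):ℕ):ℝ) + b + 1 = ((j:ℝ) + b + 1) + ((N-r:ℕ):ℝ) by push_cast; ring,
        show ((j+(N-r):ℕ):ℝ) - j + 1 = ((N-r:ℕ):ℝ) + 1 by push_cast; ring,
        Real.Gamma_nat_eq_factorial, Real.Gamma_nat_eq_factorial]
      field_simp
    rw [Finset.sum_congr rfl hterm, ← Finset.sum_div, hgv]
    unfold lcoef
    have eN : ((N:ℕ):ℝ) = (n:ℝ) - i - j := by
      rw [hN, Nat.cast_sub (by omega), Nat.cast_sub (by omega)]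
    rw [show (n:ℝ) + (a+b+1) + 1 = ((i:ℝ)+a+1) + ((j:ℝ)+b+1) + ((N:ℕ):ℝ) by rw [eN]; ring,
      show (n:ℝ) - ((i+j:ℕ):ℝ) + 1 = ((N:ℕ):ℝ) + 1 by rw [eN]; push_cast; ring,
      show ((i+j:ℕ):ℝ) + (a+b+1) + 1 = ((i:ℝ)+a+1) + ((j:ℝ)+b+1) by push_cast; ring,
      Real.Gamma_nat_eq_factorial]
    have hch : (((i+j).choose i : ℕ) : ℝ) * i.factorial * j.factorial = (i+j).factorial := by
      have h2 := Nat.choose_mul_factorial_mul_factorial (n := i+j) (k := i) (by omega)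
      rw [show i + j - i = j by omega] at h2
      exact_mod_cast congrArg (Nat.cast : ℕ → ℝ) h2
    have hGAB : Real.Gamma (((i:ℝ)+a+1) + ((j:ℝ)+b+1)) ≠ 0 :=
      (Real.Gamma_pos_of_pos (by linarith)).ne'
    have hfne : ∀ m : ℕ, ((m.factorial : ℕ) : ℝ) ≠ 0 := fun m => by positivity
    field_simp
    linear_combination (-1 : ℝ) * hch
  · rw [if_neg h]
    apply Finset.sum_eq_zero
    intro p hp
    have hp' : p.1 + p.2 = n := Finset.HasAntidiagonal.mem_antidiagonal.mp hp
    rcases lt_or_ge p.1 i with h' | h'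
    · rw [lcoef_eq_zero a h', zero_mul]
    · rw [lcoef_eq_zero b (by omega), mul_zero]

lemma sum_tri {M : Type*} [AddCommMonoid M] (n : ℕ) (g : ℕ × ℕ → M)
    (hg : ∀ p : ℕ × ℕ, n < p.1 + p.2 → g p = 0) :
    ∑ m ∈ range (n+1), ∑ p ∈ Finset.HasAntidiagonal.antidiagonal m, g p
      = ∑ i ∈ range (n+1), ∑ j ∈ range (n+1), g (i, j) := by
  have hdisj : (↑(range (n+1)) : Set ℕ).PairwiseDisjoint
      (fun m => (Finset.HasAntidiagonal.antidiagonal m : Finset (ℕ × ℕ))) := by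
    intro m₁ _ m₂ _ hne
    simp only [Finset.disjoint_left]
    intro p hp1 hp2
    exact hne ((Finset.HasAntidiagonal.mem_antidiagonal.mp hp1).symm.trans (Finset.HasAntidiagonal.mem_antidiagonal.mp hp2))
  rw [← Finset.sum_biUnion hdisj, ← Finset.sum_product']
  apply Finset.sum_subset
  · intro p hp
    simp only [Finset.mem_biUnion, Finset.mem_range, Finset.HasAntidiagonal.mem_antidiagonal] at hp
    obtain ⟨m, hm, hpm⟩ := hp
    simp only [Finset.mem_product, Finset.mem_range]
    omega
  · intro p hp hp'
    apply hg
    simp only [Finset.mem_biUnion, Finset.mem_range, Finset.HasAntidiagonal.mem_antidiagonal, not_exists, not_and] at hp'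
    by_contra hc
    exact hp' (p.1 + p.2) (by omega) rfl


theorem laguerre_conv (a b : ℝ) (ha : -1 < a) (hb : -1 < b) (n : ℕ) (x y : ℝ) :
    ∑ p ∈ Finset.HasAntidiagonal.antidiagonal n, laguerreL a p.1 x * laguerreL b p.2 y
      = laguerreL (a + b + 1) n (x + y) := by
  have hLHS : ∑ p ∈ Finset.HasAntidiagonal.antidiagonal n, laguerreL a p.1 x * laguerreL b p.2 y
      = ∑ i ∈ range (n+1), ∑ j ∈ range (n+1),
          (∑ p ∈ Finset.HasAntidiagonal.antidiagonal n, lcoef a p.1 i * lcoef b p.2 j) * ((-x)^i * (-y)^j) := by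
    have step1 : ∑ p ∈ Finset.HasAntidiagonal.antidiagonal n, laguerreL a p.1 x * laguerreL b p.2 y
        = ∑ p ∈ Finset.HasAntidiagonal.antidiagonal n, ∑ i ∈ range (n+1), ∑ j ∈ range (n+1),
            (lcoef a p.1 i * lcoef b p.2 j) * ((-x)^i * (-y)^j) := by
      refine Finset.sum_congr rfl fun p hp => ?_
      rw [laguerreL_eq' a (Finset.HasAntidiagonal.antidiagonal.fst_le hp),
        laguerreL_eq' b (Finset.HasAntidiagonal.antidiagonal.snd_le hp), Finset.sum_mul_sum]
      exact Finset.sum_congr rfl fun i _ => Finset.sum_congr rfl fun j _ => by ring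
    rw [step1, Finset.sum_comm]
    refine Finset.sum_congr rfl fun i _ => ?_
    rw [Finset.sum_comm]
    refine Finset.sum_congr rfl fun j _ => ?_
    rw [Finset.sum_mul]
  have hG : ∀ p : ℕ × ℕ, n < p.1 + p.2 →
      (if p.1 + p.2 ≤ n then (((p.1+p.2).choose p.1 : ℕ) : ℝ) * lcoef (a+b+1) n (p.1+p.2) else 0)
        * ((-x)^p.1 * (-y)^p.2) = 0 := by
    intro p hp
    rw [if_neg (by omega), zero_mul]
  have hRHS : laguerreL (a + b + 1) n (x + y)
      = ∑ i ∈ range (n+1), ∑ j ∈ range (n+1),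
          (if i + j ≤ n then (((i+j).choose i : ℕ) : ℝ) * lcoef (a+b+1) n (i+j) else 0)
            * ((-x)^i * (-y)^j) := by
    rw [laguerreL_eq, ← sum_tri n _ hG]
    refine Finset.sum_congr rfl fun m hm => ?_
    simp only [Finset.mem_range] at hm
    rw [show (-(x+y)) = (-x) + (-y) by ring, Commute.add_pow' (Commute.all _ _), Finset.mul_sum]
    refine Finset.sum_congr rfl fun p hp => ?_
    have hp' : p.1 + p.2 = m := Finset.HasAntidiagonal.mem_antidiagonal.mp hp
    rw [if_pos (by omega), hp', nsmul_eq_mul]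
    ring
  rw [hLHS, hRHS]
  refine Finset.sum_congr rfl fun i _ => Finset.sum_congr rfl fun j _ => ?_
  rw [key a b ha hb n i j]

lemma sum_adT_succ {M : Type*} [AddCommMonoid M] (d n : ℕ) (f : (Fin (d+1) → ℕ) → M) :
    ∑ μ ∈ Finset.Nat.antidiagonalTuple (d+1) n, f μ
      = ∑ p ∈ Finset.HasAntidiagonal.antidiagonal n, ∑ ν ∈ Finset.Nat.antidiagonalTuple d p.2,
          f (Fin.cons p.1 ν) := by
  rw [Finset.sum_sigma']
  refine Finset.sum_nbij' (fun μ => (⟨(μ 0, ∑ i : Fin d, μ i.succ), Fin.tail μ⟩ : (_ : ℕ × ℕ) × (Fin d → ℕ)))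
    (fun q => Fin.cons q.1.1 q.2) ?_ ?_ ?_ ?_ ?_
  · intro μ hμ
    simp only [Finset.Nat.mem_antidiagonalTuple] at hμ
    simp only [Finset.mem_sigma, Finset.HasAntidiagonal.mem_antidiagonal, Finset.Nat.mem_antidiagonalTuple]
    constructor
    · rw [← hμ, Fin.sum_univ_succ]
    · rfl
  · rintro ⟨p, ν⟩ hq
    simp only [Finset.mem_sigma, Finset.HasAntidiagonal.mem_antidiagonal,
      Finset.Nat.mem_antidiagonalTuple] at hq ⊢
    rw [Fin.sum_univ_succ, Fin.cons_zero]
    simp only [Fin.cons_succ]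
    rw [hq.2, hq.1]
  · intro μ _
    exact Fin.cons_self_tail μ
  · rintro ⟨p, ν⟩ hq
    simp only [Finset.mem_sigma, Finset.HasAntidiagonal.mem_antidiagonal,
      Finset.Nat.mem_antidiagonalTuple] at hq
    refine Sigma.ext ?_ (heq_of_eq ?_)
    · simp only [Fin.cons_zero, Fin.cons_succ]
      rw [hq.2]
    · simp only [Fin.cons_zero]
      exact Fin.tail_cons _ _
  · intro μ _
    exact (congrArg f (Fin.cons_self_tail μ)).symm

theorem statement17' : ∀ (d : ℕ), 1 ≤ d → ∀ (α : Fin d → ℝ), (∀ i, -1 < α i) →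
    ∀ (n : ℕ) (x : Fin d → ℝ),
    ∑ μ ∈ Finset.Nat.antidiagonalTuple d n, ∏ i, laguerreL (α i) (μ i) (x i)
      = laguerreL ((∑ i, α i) + d - 1) n (∑ i, x i) := by
  intro d hd
  induction d, hd using Nat.le_induction with
  | base =>
    intro α hα n x
    rw [Finset.Nat.antidiagonalTuple_one, Finset.sum_singleton, Fin.prod_univ_one,
      Fin.sum_univ_one, Fin.sum_univ_one,
      show ((![n] : Fin 1 → ℕ) 0) = n from rfl,
      show (α 0) + ((1:ℕ):ℝ) - 1 = α 0 by norm_num]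
  | succ d hd' ih =>
    intro α hα n x
    rw [sum_adT_succ]
    have tailsum : ∀ p : ℕ × ℕ, p ∈ Finset.HasAntidiagonal.antidiagonal n →
        ∑ ν ∈ Finset.Nat.antidiagonalTuple d p.2,
          ∏ i, laguerreL (α i) ((Fin.cons p.1 ν : Fin (d+1) → ℕ) i) (x i)
        = laguerreL (α 0) p.1 (x 0) *
            laguerreL ((∑ i : Fin d, α i.succ) + d - 1) p.2 (∑ i : Fin d, x i.succ) := by
      intro p _
      rw [← ih (fun i => α i.succ) (fun i => hα i.succ) p.2 (fun i => x i.succ),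
        Finset.mul_sum]
      refine Finset.sum_congr rfl fun ν _ => ?_
      rw [Fin.prod_univ_succ]
      simp only [Fin.cons_zero, Fin.cons_succ]
    rw [Finset.sum_congr rfl tailsum]
    have hβ : -1 < (∑ i : Fin d, α i.succ) + d - 1 := by
      have hlt : (-1 : ℝ) * d < ∑ i : Fin d, α i.succ := by
        have := Finset.sum_lt_sum_of_nonempty
          (s := (Finset.univ : Finset (Fin d)))
          (f := fun _ => (-1 : ℝ)) (g := fun i => α i.succ)
          (Finset.univ_nonempty_iff.mpr (Fin.pos_iff_nonempty.mp (by omega)))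
          (fun i _ => hα i.succ)
        simpa using this
      linarith
    rw [laguerre_conv (α 0) _ (hα 0) hβ n (x 0) (∑ i : Fin d, x i.succ)]
    rw [show α 0 + ((∑ i : Fin d, α i.succ) + d - 1) + 1
        = (∑ i : Fin (d+1), α i) + (d+1 : ℕ) - 1 by
      rw [Fin.sum_univ_succ]; push_cast; ring]
    rw [← Fin.sum_univ_succ (f := x)]

end Statement17Aux

/-- (Laguerre polynomial addition formula.) For `d ≥ 1`, `α ∈ (-1,∞)^d`
and `n ∈ ℕ`,
`∑_{|μ|₁ = n} ∏_i L_{μ_i}^{α_i}(x_i) = L_n^{|α|₁+d-1}(x_1 + ⋯ + x_d)` for all `x ∈ ℝ^d`. -/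
theorem statement17 {d : ℕ} (hd : 1 ≤ d) (α : Fin d → ℝ) (hα : ∀ i, -1 < α i)
    (n : ℕ) (x : Fin d → ℝ) :
    ∑ μ ∈ Finset.Nat.antidiagonalTuple d n, ∏ i, laguerreL (α i) (μ i) (x i)
      = laguerreL ((∑ i, α i) + d - 1) n (∑ i, x i) :=
  Statement17Aux.statement17' d hd α hα n x
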